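/- Let (X, Σ, μ) and (Y, Γ, ν) be finite measure spaces and let K : L¹(X, μ) → L¹(Y, ν) be an integral operator with kernel k : X × Y → ℝ, meaning that for every f ∈ L¹(X, μ), the function x ↦ k(x,y)f(x) is integrable for ν-a.e. y and (Kf)(y) = ∫_X k(x,y) f(x) dμ(x) for ν-a.e. y. Then k is integrable on the product space, i.e. k ∈ L¹(X × Y, μ ⊗ ν). -/

import Mathlib

set_option linter.unusedSectionVars false
set_option linter.unusedVariables false
set_option maxHeartbeats 1000000

open MeasureTheory Set Filter
open scoped ENNReal symmDiff

section Aux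

variable {X Y : Type*} [MeasurableSpace X] [MeasurableSpace Y]

/-- The class of subsets of `X × Y` whose `y`-sections are piecewise constant in `y`
over a finite measurable partition of `Y`. -/
def gridClass (X Y : Type*) [MeasurableSpace X] [MeasurableSpace Y] : Set (Set (X × Y)) :=
  {S | ∃ (ι : Type) (_ : Fintype ι) (j : Y → ι) (A : ι → Set X),
      (∀ i, MeasurableSet (j ⁻¹' {i})) ∧ (∀ i, MeasurableSet (A i)) ∧
      S = {p : X × Y | p.1 ∈ A (j p.2)}}

lemma gridClass_eq_iUnion {ι : Type} [Fintype ι] (j : Y → ι) (A : ι → Set X) :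
    {p : X × Y | p.1 ∈ A (j p.2)} = ⋃ i, (A i) ×ˢ (j ⁻¹' {i}) := by
  ext ⟨x, y⟩
  simp only [mem_setOf_eq, mem_iUnion, mem_prod, mem_preimage, mem_singleton_iff]
  constructor
  · intro h; exact ⟨j y, h, rfl⟩
  · rintro ⟨i, hx, rfl⟩; exact hx

lemma gridClass_measurableSet {S : Set (X × Y)} (hS : S ∈ gridClass X Y) :
    MeasurableSet S := by
  obtain ⟨ι, _, j, A, hj, hA, rfl⟩ := hS
  rw [gridClass_eq_iUnion]
  exact MeasurableSet.iUnion fun i => (hA i).prod (hj i)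

lemma gridClass_empty : (∅ : Set (X × Y)) ∈ gridClass X Y :=
  ⟨Unit, inferInstance, fun _ => (), fun _ => ∅, fun _ => by
      simpa using MeasurableSet.univ,
    fun _ => MeasurableSet.empty, by simp⟩

lemma gridClass_compl {S : Set (X × Y)} (hS : S ∈ gridClass X Y) :
    Sᶜ ∈ gridClass X Y := by
  obtain ⟨ι, _, j, A, hj, hA, rfl⟩ := hS
  exact ⟨ι, ‹_›, j, fun i => (A i)ᶜ, hj, fun i => (hA i).compl, by
    ext p; simp⟩

lemma gridClass_inter {S T : Set (X × Y)} (hS : S ∈ gridClass X Y)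
    (hT : T ∈ gridClass X Y) : S ∩ T ∈ gridClass X Y := by
  obtain ⟨ι, _, j, A, hj, hA, rfl⟩ := hS
  obtain ⟨ι', _, j', A', hj', hA', rfl⟩ := hT
  refine ⟨ι × ι', inferInstance, fun y => (j y, j' y),
    fun i => A i.1 ∩ A' i.2, fun i => ?_, fun i => (hA i.1).inter (hA' i.2), ?_⟩
  · have : (fun y => (j y, j' y)) ⁻¹' {i} = j ⁻¹' {i.1} ∩ j' ⁻¹' {i.2} := by
      ext y; simp [Prod.ext_iff]
    rw [this]; exact (hj i.1).inter (hj' i.2)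
  · ext p; simp [mem_setOf_eq]

lemma gridClass_union {S T : Set (X × Y)} (hS : S ∈ gridClass X Y)
    (hT : T ∈ gridClass X Y) : S ∪ T ∈ gridClass X Y := by
  have := gridClass_compl (gridClass_inter (gridClass_compl hS) (gridClass_compl hT))
  simpa [compl_inter, compl_compl] using this

lemma gridClass_rect {A : Set X} {B : Set Y} (hA : MeasurableSet A)
    (hB : MeasurableSet B) : A ×ˢ B ∈ gridClass X Y := by
  classical
  refine ⟨Bool, inferInstance, fun y => decide (y ∈ B), fun b => if b then A else ∅,
    fun b => ?_, fun b => by by_cases h : b = true <;> simp [h, hA], ?_⟩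
  · rcases b with _ | _
    · have : (fun y => decide (y ∈ B)) ⁻¹' {false} = Bᶜ := by
        ext y; simp
      rw [this]; exact hB.compl
    · have : (fun y => decide (y ∈ B)) ⁻¹' {true} = B := by
        ext y; simp
      rw [this]; exact hB
  · ext ⟨x, y⟩
    by_cases h : y ∈ B <;> simp [h]


/-- Every measurable set in the product can be approximated in measure by sets in
`gridClass`. -/
lemma gridClass_approx (lam : Measure (X × Y)) [IsFiniteMeasure lam] :
    ∀ ⦃S : Set (X × Y)⦄, MeasurableSet S → ∀ ε : ℝ≥0∞, 0 < ε →
      ∃ T ∈ gridClass X Y, lam (symmDiff S T) ≤ ε := by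
  have hind := MeasurableSpace.induction_on_inter
    (C := fun S _ => ∀ ε : ℝ≥0∞, 0 < ε →
      ∃ T ∈ gridClass X Y, lam (symmDiff S T) ≤ ε)
    (s := image2 (· ×ˢ ·) { s : Set X | MeasurableSet s } { t : Set Y | MeasurableSet t })
    generateFrom_prod.symm isPiSystem_prod
  refine hind ?_ ?_ ?_ ?_
  · intro ε _
    exact ⟨∅, gridClass_empty, by simp⟩
  · rintro t ⟨A, hA, B, hB, rfl⟩ ε _
    exact ⟨A ×ˢ B, gridClass_rect hA hB, by simp⟩
  · rintro t _ ht ε hε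
    obtain ⟨T, hT, hTle⟩ := ht ε hε
    exact ⟨Tᶜ, gridClass_compl hT, by rwa [compl_symmDiff_compl]⟩
  · rintro f hdisj hmeas hf ε hε
    -- choose N with small tail
    have htsum : ∑' i, lam (f i) ≠ ∞ := by
      rw [← measure_iUnion hdisj hmeas]
      exact (measure_lt_top lam _).ne
    have htail := ENNReal.tendsto_sum_nat_add (fun i => lam (f i)) htsum
    have hε2 : 0 < ε / 2 := ENNReal.div_pos hε.ne' (by norm_num)
    obtain ⟨N, hN⟩ := (ENNReal.nhds_zero_basis.tendsto_right_iff.mp htail (ε / 2) hε2).exists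
    -- approximate the first N pieces
    have : ∀ i : ℕ, ∃ T ∈ gridClass X Y, lam (symmDiff (f i) T) ≤ ε / 2 / (N + 1) := by
      intro i
      exact hf i _ (ENNReal.div_pos hε2.ne' (by simp [ENNReal.add_ne_top]))
    choose T hT hTle using this
    classical
    refine ⟨⋃ i ∈ Finset.range N, T i, ?_, ?_⟩
    · induction (Finset.range N) using Finset.induction_on with
      | empty => simpa using gridClass_empty
      | insert _ _ _ ih =>
          rw [Finset.set_biUnion_insert]
          exact gridClass_union (hT _) ih
    · have hsub : symmDiff (⋃ i, f i) (⋃ i ∈ Finset.range N, T i) ⊆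
          (⋃ i ∈ Finset.range N, symmDiff (f i) (T i)) ∪ ⋃ i, f (i + N) := by
        intro a ha
        rcases ha with ⟨haf, hanT⟩ | ⟨haT, hanf⟩
        · obtain ⟨i, hai⟩ := mem_iUnion.mp haf
          by_cases hi : i < N
          · left
            refine mem_biUnion (Finset.mem_range.mpr hi) ?_
            exact Or.inl ⟨hai, fun h => hanT (mem_biUnion (Finset.mem_range.mpr hi) h)⟩
          · right
            refine mem_iUnion.mpr ⟨i - N, ?_⟩
            rwa [Nat.sub_add_cancel (le_of_not_gt hi)]
        · obtain ⟨i, hmem, hai⟩ := mem_iUnion₂.mp haT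
          left
          refine mem_biUnion hmem (Or.inr ⟨hai, fun h => hanf (mem_iUnion.mpr ⟨i, h⟩)⟩)
      calc lam (symmDiff (⋃ i, f i) (⋃ i ∈ Finset.range N, T i))
          ≤ lam ((⋃ i ∈ Finset.range N, symmDiff (f i) (T i)) ∪ ⋃ i, f (i + N)) :=
            measure_mono hsub
        _ ≤ lam (⋃ i ∈ Finset.range N, symmDiff (f i) (T i)) + lam (⋃ i, f (i + N)) :=
            measure_union_le _ _
        _ ≤ (∑ i ∈ Finset.range N, lam (symmDiff (f i) (T i))) + ∑' i, lam (f (i + N)) := by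
            gcongr
            · exact measure_biUnion_finset_le _ _
            · exact measure_iUnion_le _
        _ ≤ (∑ i ∈ Finset.range N, ε / 2 / (N + 1)) + ε / 2 := by
            gcongr
            · exact hTle _
            · exact le_of_lt hN
        _ ≤ ε / 2 + ε / 2 := by
            gcongr
            rw [Finset.sum_const, Finset.card_range, nsmul_eq_mul]
            calc (N : ℝ≥0∞) * (ε / 2 / (N + 1))
                ≤ ((N : ℝ≥0∞) + 1) * (ε / 2 / (N + 1)) := by gcongr; exact le_self_add
              _ ≤ ε / 2 := ENNReal.mul_div_le
        _ = ε := ENNReal.add_halves ε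


/-- The indicator of a measurable set as an element of `L¹`. -/
noncomputable def indLp (μ : Measure X) [IsFiniteMeasure μ] {A : Set X}
    (hA : MeasurableSet A) : Lp ℝ 1 μ :=
  indicatorConstLp 1 hA (measure_ne_top μ A) 1

lemma indLp_coeFn (μ : Measure X) [IsFiniteMeasure μ] {A : Set X} (hA : MeasurableSet A) :
    ⇑(indLp μ hA) =ᵐ[μ] A.indicator fun _ => (1 : ℝ) :=
  indicatorConstLp_coeFn

lemma indLp_norm (μ : Measure X) [IsFiniteMeasure μ] {A : Set X} (hA : MeasurableSet A) :
    ‖indLp μ hA‖ = (μ A).toReal := by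
  rw [indLp, norm_indicatorConstLp one_ne_zero ENNReal.one_ne_top]
  simp
  rfl

lemma rep_indicator (μ : Measure X) (ν : Measure Y) [IsFiniteMeasure μ] [IsFiniteMeasure ν]
    (K : Lp ℝ 1 μ →L[ℝ] Lp ℝ 1 ν) (k : X × Y → ℝ)
    (hrep : ∀ f : Lp ℝ 1 μ, ∀ᵐ y ∂ν, (K f : Y → ℝ) y = ∫ x, k (x, y) * f x ∂μ)
    {A : Set X} (hA : MeasurableSet A) :
    ∀ᵐ y ∂ν, (K (indLp μ hA) : Y → ℝ) y = ∫ x in A, k (x, y) ∂μ := by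
  filter_upwards [hrep (indLp μ hA)] with y hy
  rw [hy]
  rw [← integral_indicator hA]
  apply integral_congr_ae
  filter_upwards [indLp_coeFn μ hA] with x hx
  rw [hx]
  by_cases h : x ∈ A <;> simp [h]

lemma int_abs_K_le (μ : Measure X) (ν : Measure Y) [IsFiniteMeasure μ] [IsFiniteMeasure ν]
    (K : Lp ℝ 1 μ →L[ℝ] Lp ℝ 1 ν) {A : Set X} (hA : MeasurableSet A) :
    ∫ y, |(K (indLp μ hA) : Y → ℝ) y| ∂ν ≤ ‖K‖ * (μ A).toReal := by
  have h1 : ∫ y, |(K (indLp μ hA) : Y → ℝ) y| ∂ν = ‖K (indLp μ hA)‖ := by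
    rw [L1.norm_eq_integral_norm]
    simp only [Real.norm_eq_abs]
  rw [h1]
  calc ‖K (indLp μ hA)‖ ≤ ‖K‖ * ‖indLp μ hA‖ := K.le_opNorm _
    _ = ‖K‖ * (μ A).toReal := by rw [indLp_norm]


section Core2

variable (μ : Measure X) (ν : Measure Y) [IsFiniteMeasure μ] [IsFiniteMeasure ν]
  (K : Lp ℝ 1 μ →L[ℝ] Lp ℝ 1 ν) (k : X × Y → ℝ)
  {B : Set Y}

/-- The partial integral of the localized kernel. -/
noncomputable def gfun (kB : X × Y → ℝ) (E : Set Y) (x : X) : ℝ := ∫ y in E, kB (x, y) ∂ν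

variable {ν}

lemma gfun_integrable {kB : X × Y → ℝ} (hkB : Integrable kB (μ.prod ν))
    {E : Set Y} (hE : MeasurableSet E) : Integrable (gfun ν kB E) μ := by
  have h1 : Integrable ((univ ×ˢ E).indicator kB) (μ.prod ν) :=
    hkB.indicator (MeasurableSet.univ.prod hE)
  have h2 := h1.integral_prod_left
  refine h2.congr (Eventually.of_forall fun x => ?_)
  simp only [gfun]
  rw [← integral_indicator hE]
  congr 1
  funext y
  by_cases h : y ∈ E <;> simp [indicator, h]

variable {μ K k}

lemma gfun_key (hk : Measurable k)
    (hrep : ∀ f : Lp ℝ 1 μ, ∀ᵐ y ∂ν, (K f : Y → ℝ) y = ∫ x, k (x, y) * f x ∂μ)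
    (hB : MeasurableSet B) (hkB : Integrable ((univ ×ˢ B).indicator k) (μ.prod ν))
    {A : Set X} (hA : MeasurableSet A) {E : Set Y} (hE : MeasurableSet E) :
    ∫ x in A, gfun ν ((univ ×ˢ B).indicator k) E x ∂μ
      = ∫ y in E ∩ B, (K (indLp μ hA) : Y → ℝ) y ∂ν := by
  set kB := (univ ×ˢ B).indicator k with hkBdef
  set F : X → Y → ℝ := fun x y => ((A ×ˢ E).indicator kB) (x, y) with hFdef
  have hFint : Integrable (Function.uncurry F) (μ.prod ν) :=
    hkB.indicator (hA.prod hE)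
  have hswap : ∫ x, ∫ y, F x y ∂ν ∂μ = ∫ y, ∫ x, F x y ∂μ ∂ν :=
    integral_integral_swap hFint
  have hLHS : ∫ x, ∫ y, F x y ∂ν ∂μ = ∫ x in A, gfun ν kB E x ∂μ := by
    rw [← integral_indicator hA]
    congr 1
    funext x
    by_cases hx : x ∈ A
    · have : ∀ y, F x y = E.indicator (fun y => kB (x, y)) y := by
        intro y; by_cases hy : y ∈ E <;> simp [hFdef, indicator, hx, hy]
      simp only [this]
      rw [integral_indicator hE, indicator_of_mem hx, gfun]
    · have : ∀ y, F x y = 0 := by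
        intro y; simp [hFdef, indicator, hx]
      simp [this, indicator_of_notMem hx]
  have hRHS : ∫ y, ∫ x, F x y ∂μ ∂ν = ∫ y in E ∩ B, (K (indLp μ hA) : Y → ℝ) y ∂ν := by
    have hstep : ∀ y, (∫ x, F x y ∂μ)
        = E.indicator (fun y => B.indicator (fun y => ∫ x in A, k (x, y) ∂μ) y) y := by
      intro y
      by_cases hy : y ∈ E
      · have h1 : ∀ x, F x y = A.indicator (fun x => kB (x, y)) x := by
          intro x; by_cases hx : x ∈ A <;> simp [hFdef, indicator, hx, hy]
        simp only [h1]
        rw [integral_indicator hA, indicator_of_mem hy]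
        by_cases hyB : y ∈ B
        · rw [indicator_of_mem hyB]
          apply setIntegral_congr_fun hA
          intro x _
          simp [hkBdef, indicator, hyB]
        · rw [indicator_of_notMem hyB]
          have : ∀ x, kB (x, y) = 0 := fun x => by simp [hkBdef, indicator, hyB]
          simp [this]
      · have : ∀ x, F x y = 0 := by
          intro x; simp [hFdef, indicator, hy]
        simp [this, indicator_of_notMem hy]
    simp only [hstep]
    rw [integral_indicator hE, setIntegral_indicator hB]
    apply setIntegral_congr_ae (hE.inter hB)
    filter_upwards [rep_indicator μ ν K k hrep hA] with y hy _
    exact hy.symm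
  rw [← hLHS, hswap, hRHS]

lemma gfun_bound (hk : Measurable k)
    (hrep : ∀ f : Lp ℝ 1 μ, ∀ᵐ y ∂ν, (K f : Y → ℝ) y = ∫ x, k (x, y) * f x ∂μ)
    (hB : MeasurableSet B) (hkB : Integrable ((univ ×ˢ B).indicator k) (μ.prod ν))
    {E : Set Y} (hE : MeasurableSet E) :
    ∀ᵐ x ∂μ, |gfun ν ((univ ×ˢ B).indicator k) E x| ≤ ‖K‖ := by
  set kB := (univ ×ˢ B).indicator k with hkBdef
  have key : ∀ {A : Set X}, MeasurableSet A →
      |∫ x in A, gfun ν kB E x ∂μ| ≤ ‖K‖ * (μ A).toReal := by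
    intro A hA
    rw [gfun_key hk hrep hB hkB hA hE]
    have h0 : Integrable (fun y => (K (indLp μ hA) : Y → ℝ) y) ν := L1.integrable_coeFn _
    calc |∫ y in E ∩ B, (K (indLp μ hA) : Y → ℝ) y ∂ν|
        ≤ ∫ y in E ∩ B, |(K (indLp μ hA) : Y → ℝ) y| ∂ν := by
          rw [← Real.norm_eq_abs]
          exact (norm_integral_le_integral_norm _).trans_eq (by simp [Real.norm_eq_abs])
      _ ≤ ∫ y, |(K (indLp μ hA) : Y → ℝ) y| ∂ν :=
          setIntegral_le_integral h0.abs (Eventually.of_forall fun y => abs_nonneg _)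
      _ ≤ ‖K‖ * (μ A).toReal := int_abs_K_le μ ν K hA
  have hInt : Integrable (gfun ν kB E) μ := gfun_integrable μ hkB hE
  have h1 : 0 ≤ᵐ[μ] fun x => ‖K‖ - gfun ν kB E x := by
    apply ae_nonneg_of_forall_setIntegral_nonneg ((integrable_const _).sub hInt)
    intro s hs _
    simp only [Pi.sub_apply]
    rw [integral_sub (integrable_const _).integrableOn hInt.integrableOn, setIntegral_const,
      smul_eq_mul]
    have := (key hs)
    have h2 : ∫ x in s, gfun ν kB E x ∂μ ≤ ‖K‖ * (μ s).toReal :=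
      (le_abs_self _).trans this
    have hreal : μ.real s = (μ s).toReal := rfl
    rw [hreal]
    linarith
  have h2 : 0 ≤ᵐ[μ] fun x => ‖K‖ + gfun ν kB E x := by
    apply ae_nonneg_of_forall_setIntegral_nonneg ((integrable_const _).add hInt)
    intro s hs _
    simp only [Pi.add_apply]
    rw [integral_add (integrable_const _).integrableOn hInt.integrableOn, setIntegral_const,
      smul_eq_mul]
    have := (key hs)
    have h2 : -(‖K‖ * (μ s).toReal) ≤ ∫ x in s, gfun ν kB E x ∂μ :=
      neg_le_of_abs_le this |>.trans_eq' rfl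
    have hreal : μ.real s = (μ s).toReal := rfl
    rw [hreal]
    linarith
  filter_upwards [h1, h2] with x hx1 hx2
  simp only [Pi.zero_apply] at hx1 hx2
  exact abs_le.mpr ⟨by linarith, by linarith⟩

lemma class_bound (hk : Measurable k)
    (hrep : ∀ f : Lp ℝ 1 μ, ∀ᵐ y ∂ν, (K f : Y → ℝ) y = ∫ x, k (x, y) * f x ∂μ)
    (hB : MeasurableSet B) (hkB : Integrable ((univ ×ˢ B).indicator k) (μ.prod ν))
    {S : Set (X × Y)} (hS : S ∈ gridClass X Y) :
    |∫ p in S, ((univ ×ˢ B).indicator k) p ∂(μ.prod ν)| ≤ ‖K‖ * (μ univ).toReal := by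
  set kB := (univ ×ˢ B).indicator k with hkBdef
  have hSm : MeasurableSet S := gridClass_measurableSet hS
  obtain ⟨ι, fint, j, A, hj, hA, rfl⟩ := hS
  haveI := fint
  set S : Set (X × Y) := {p : X × Y | p.1 ∈ A (j p.2)} with hSdef
  have hG : Integrable (S.indicator kB) (μ.prod ν) := hkB.indicator hSm
  have h1 : ∫ p in S, kB p ∂(μ.prod ν) = ∫ p, S.indicator kB p ∂(μ.prod ν) :=
    (integral_indicator hSm).symm
  have h2 : ∫ p, S.indicator kB p ∂(μ.prod ν)
      = ∫ x, ∫ y, S.indicator kB (x, y) ∂ν ∂μ := integral_prod _ hG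
  have hUm : ∀ U : Set ι, MeasurableSet (j ⁻¹' U) := by
    intro U
    have : j ⁻¹' U = ⋃ i ∈ U, j ⁻¹' {i} := by
      ext y; simp
    rw [this]
    exact MeasurableSet.biUnion (U.to_countable) fun i _ => hj i
  have hinner : ∀ x, (∫ y, S.indicator kB (x, y) ∂ν)
      = gfun ν kB (j ⁻¹' {i | x ∈ A i}) x := by
    intro x
    have heq : ∀ y, S.indicator kB (x, y)
        = (j ⁻¹' {i | x ∈ A i}).indicator (fun y => kB (x, y)) y := by
      intro y
      by_cases h : x ∈ A (j y)
      · rw [indicator_of_mem (by exact h), indicator_of_mem (by exact h)]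
      · rw [indicator_of_notMem (by exact h), indicator_of_notMem (by exact h)]
    simp only [heq]
    rw [integral_indicator (hUm _), gfun]
  haveI : Countable (Set ι) := Countable.of_equiv _ (Equiv.refl _)
  have hall : ∀ᵐ x ∂μ, ∀ U : Set ι, |gfun ν kB (j ⁻¹' U) x| ≤ ‖K‖ := by
    rw [ae_all_iff]
    intro U
    exact gfun_bound hk hrep hB hkB (hUm U)
  have habs : ∀ᵐ x ∂μ, |∫ y, S.indicator kB (x, y) ∂ν| ≤ ‖K‖ := by
    filter_upwards [hall] with x hx
    rw [hinner x]
    exact hx _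
  have hinnerInt : Integrable (fun x => ∫ y, S.indicator kB (x, y) ∂ν) μ :=
    hG.integral_prod_left
  rw [h1, h2]
  calc |∫ x, ∫ y, S.indicator kB (x, y) ∂ν ∂μ|
      ≤ ∫ x, |∫ y, S.indicator kB (x, y) ∂ν| ∂μ := by
        rw [← Real.norm_eq_abs]
        exact (norm_integral_le_integral_norm _).trans_eq (by simp [Real.norm_eq_abs])
    _ ≤ ∫ _x, ‖K‖ ∂μ := integral_mono_ae hinnerInt.abs (integrable_const _) habs
    _ = ‖K‖ * (μ univ).toReal := by
        rw [integral_const, smul_eq_mul, mul_comm]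
        rfl

lemma core_bound (hk : Measurable k)
    (hrep : ∀ f : Lp ℝ 1 μ, ∀ᵐ y ∂ν, (K f : Y → ℝ) y = ∫ x, k (x, y) * f x ∂μ)
    (hB : MeasurableSet B) (hkB : Integrable ((univ ×ˢ B).indicator k) (μ.prod ν)) :
    ∫ p, |((univ ×ˢ B).indicator k) p| ∂(μ.prod ν) ≤ 2 * ‖K‖ * (μ univ).toReal := by
  set kB := (univ ×ˢ B).indicator k with hkBdef
  have hmeas : Measurable kB := hk.indicator (MeasurableSet.univ.prod hB)
  set P : Set (X × Y) := {p | 0 ≤ kB p} with hPdef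
  have hP : MeasurableSet P := measurableSet_le measurable_const hmeas
  set lam : Measure (X × Y) := (μ.prod ν).withDensity (fun p => ‖kB p‖₊) with hlamdef
  haveI : IsFiniteMeasure lam := by
    constructor
    rw [hlamdef, withDensity_apply _ MeasurableSet.univ, Measure.restrict_univ]
    exact hkB.2
  have hlamS : ∀ {S : Set (X × Y)}, MeasurableSet S →
      ∫ p in S, |kB p| ∂(μ.prod ν) = (lam S).toReal := by
    intro S hSm
    rw [hlamdef, withDensity_apply _ hSm]
    have := ofReal_integral_norm_eq_lintegral_enorm (hkB.restrict (s := S))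
    simp only [Real.norm_eq_abs, enorm_eq_nnnorm] at this
    rw [← this, ENNReal.toReal_ofReal]
    exact integral_nonneg fun p => abs_nonneg _
  have hdiff : ∀ {S T : Set (X × Y)}, MeasurableSet S → MeasurableSet T →
      |(∫ p in S, kB p ∂(μ.prod ν)) - ∫ p in T, kB p ∂(μ.prod ν)| ≤ (lam (S ∆ T)).toReal := by
    intro S T hSm hTm
    rw [← hlamS (hSm.symmDiff hTm)]
    rw [← integral_indicator hSm, ← integral_indicator hTm,
      ← integral_sub (hkB.indicator hSm) (hkB.indicator hTm)]
    have hptwise : ∀ p, |S.indicator kB p - T.indicator kB p|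
        ≤ (S ∆ T).indicator (fun p => |kB p|) p := by
      intro p
      by_cases hS' : p ∈ S <;> by_cases hT' : p ∈ T
      · rw [indicator_of_mem hS', indicator_of_mem hT',
          indicator_of_notMem (by simp [symmDiff_def, hS', hT'])]
        simp
      · rw [indicator_of_mem hS', indicator_of_notMem hT',
          indicator_of_mem (by simp [symmDiff_def, hS', hT'])]
        simp
      · rw [indicator_of_notMem hS', indicator_of_mem hT',
          indicator_of_mem (by simp [symmDiff_def, hS', hT'])]
        simp [abs_neg]
      · rw [indicator_of_notMem hS', indicator_of_notMem hT',
          indicator_of_notMem (by simp [symmDiff_def, hS', hT'])]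
        simp
    rw [← integral_indicator (hSm.symmDiff hTm)]
    calc |∫ p, (S.indicator kB p - T.indicator kB p) ∂(μ.prod ν)|
        ≤ ∫ p, |S.indicator kB p - T.indicator kB p| ∂(μ.prod ν) := by
          rw [← Real.norm_eq_abs]
          exact (norm_integral_le_integral_norm _).trans_eq (by simp [Real.norm_eq_abs])
      _ ≤ ∫ p, (S ∆ T).indicator (fun p => |kB p|) p ∂(μ.prod ν) := by
          apply integral_mono ((hkB.indicator hSm).sub (hkB.indicator hTm)).abs
            (hkB.abs.indicator (hSm.symmDiff hTm)) hptwise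
  have habs_split : ∫ p, |kB p| ∂(μ.prod ν)
      = (∫ p in P, kB p ∂(μ.prod ν)) - ∫ p in Pᶜ, kB p ∂(μ.prod ν) := by
    rw [← integral_indicator hP, ← integral_indicator hP.compl,
      ← integral_sub (hkB.indicator hP) (hkB.indicator hP.compl)]
    apply integral_congr_ae
    apply Eventually.of_forall
    intro p
    show |kB p| = P.indicator kB p - Pᶜ.indicator kB p
    by_cases h : p ∈ P
    · rw [indicator_of_mem h, indicator_of_notMem (by simpa using h)]
      have hle : 0 ≤ kB p := h
      simp [abs_of_nonneg hle]
    · rw [indicator_of_notMem h, indicator_of_mem (by simpa using h)]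
      have hlt : kB p < 0 := by simpa [hPdef, not_le] using h
      simp [abs_of_neg hlt]
  have main : ∀ δ : ℝ, 0 < δ → ∫ p, |kB p| ∂(μ.prod ν) ≤ 2 * ‖K‖ * (μ univ).toReal + 2 * δ := by
    intro δ hδ
    obtain ⟨T, hTgrid, hTle⟩ := gridClass_approx lam hP (ENNReal.ofReal δ)
      (ENNReal.ofReal_pos.mpr hδ)
    have hTm : MeasurableSet T := gridClass_measurableSet hTgrid
    have hlamle : (lam (P ∆ T)).toReal ≤ δ := by
      have h1 : (lam (P ∆ T)).toReal ≤ (ENNReal.ofReal δ).toReal :=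
        ENNReal.toReal_mono ENNReal.ofReal_ne_top hTle
      rwa [ENNReal.toReal_ofReal hδ.le] at h1
    have h2 : |(∫ p in P, kB p ∂(μ.prod ν)) - ∫ p in T, kB p ∂(μ.prod ν)| ≤ δ :=
      (hdiff hP hTm).trans hlamle
    have h3 : |(∫ p in Pᶜ, kB p ∂(μ.prod ν)) - ∫ p in Tᶜ, kB p ∂(μ.prod ν)| ≤ δ := by
      refine (hdiff hP.compl hTm.compl).trans ?_
      rw [compl_symmDiff_compl]
      exact hlamle
    have h4 := class_bound hk hrep hB hkB hTgrid
    have h5 := class_bound hk hrep hB hkB (gridClass_compl hTgrid)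
    rw [habs_split]
    have e2 := abs_le.mp h2
    have e3 := abs_le.mp h3
    have e4 := abs_le.mp h4
    have e5 := abs_le.mp h5
    linarith [e2.1, e2.2, e3.1, e3.2, e4.1, e4.2, e5.1, e5.2]
  by_contra hcon
  push_neg at hcon
  set a := ∫ p, |kB p| ∂(μ.prod ν)
  set b := 2 * ‖K‖ * (μ univ).toReal
  have : a ≤ b + 2 * ((a - b) / 4) := main _ (by linarith)
  linarith

end Core2

end Aux


/-- If `K : L¹(μ) → L¹(ν)` is a bounded operator between `L¹`-spaces of
finite measure spaces admitting a kernel representation with kernel `k`, then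
`k` is integrable on the product space. -/
theorem integral_operator_kernel_integrable
    {X Y : Type*} [MeasurableSpace X] [MeasurableSpace Y]
    (μ : Measure X) (ν : Measure Y) [IsFiniteMeasure μ] [IsFiniteMeasure ν]
    (K : Lp ℝ 1 μ →L[ℝ] Lp ℝ 1 ν) (k : X × Y → ℝ) (hk : Measurable k)
    (hint : ∀ f : Lp ℝ 1 μ, ∀ᵐ y ∂ν, Integrable (fun x => k (x, y) * f x) μ)
    (hrep : ∀ f : Lp ℝ 1 μ, ∀ᵐ y ∂ν, (K f : Y → ℝ) y = ∫ x, k (x, y) * f x ∂μ) :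
    Integrable k (μ.prod ν) := by
  set ψ : Y → ℝ≥0∞ := fun y => ∫⁻ x, (‖k (x, y)‖₊ : ℝ≥0∞) ∂μ with hψdef
  have hψmeas : Measurable ψ := Measurable.lintegral_prod_left hk.nnnorm.coe_nnreal_ennreal
  -- ψ is a.e. finite
  have hone : ∀ᵐ y ∂ν, Integrable (fun x => k (x, y)) μ := by
    filter_upwards [hint (indLp μ (MeasurableSet.univ))] with y hy
    refine hy.congr ?_
    filter_upwards [indicatorConstLp_coeFn (p := 1) (μ := μ)
      (hs := MeasurableSet.univ) (hμs := measure_ne_top μ univ) (c := (1:ℝ))] with x hx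
    show k (x, y) * (indLp μ MeasurableSet.univ) x = k (x, y)
    rw [indLp, hx]
    simp
  have hψfin : ∀ᵐ y ∂ν, ψ y < ∞ := by
    filter_upwards [hone] with y hy
    exact hy.2
  -- sets where ψ is bounded
  set Bm : ℕ → Set Y := fun m => {y | ψ y ≤ m} with hBmdef
  have hBm : ∀ m, MeasurableSet (Bm m) := fun m => measurableSet_le hψmeas measurable_const
  -- region lintegral identity
  have hregion : ∀ (Bs : Set Y), MeasurableSet Bs →
      ∫⁻ p in univ ×ˢ Bs, (‖k p‖₊ : ℝ≥0∞) ∂(μ.prod ν) = ∫⁻ y in Bs, ψ y ∂ν := by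
    intro Bs hBs
    rw [← Measure.prod_restrict, Measure.restrict_univ]
    rw [lintegral_prod_symm' _ hk.nnnorm.coe_nnreal_ennreal]
  -- integrability on each region
  have hkBm : ∀ m : ℕ, Integrable ((univ ×ˢ Bm m).indicator k) (μ.prod ν) := by
    intro m
    have hmeasreg : MeasurableSet (univ ×ˢ Bm m : Set (X × Y)) :=
      MeasurableSet.univ.prod (hBm m)
    refine ⟨(hk.indicator hmeasreg).aestronglyMeasurable, ?_⟩
    have hind : ∀ p : X × Y, (‖(univ ×ˢ Bm m).indicator k p‖₊ : ℝ≥0∞)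
        = (univ ×ˢ Bm m).indicator (fun p => (‖k p‖₊ : ℝ≥0∞)) p := by
      intro p
      by_cases h : p ∈ (univ ×ˢ Bm m : Set (X × Y)) <;> simp [indicator, h]
    show ∫⁻ p, (‖(univ ×ˢ Bm m).indicator k p‖₊ : ℝ≥0∞) ∂(μ.prod ν) < ⊤
    simp only [hind]
    rw [lintegral_indicator hmeasreg, hregion _ (hBm m)]
    calc ∫⁻ y in Bm m, ψ y ∂ν ≤ ∫⁻ _ in Bm m, (m : ℝ≥0∞) ∂ν :=
          setLIntegral_mono measurable_const fun y hy => hy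
      _ = (m : ℝ≥0∞) * ν (Bm m) := setLIntegral_const _ _
      _ < ⊤ := ENNReal.mul_lt_top (by simp) (measure_lt_top ν _)
  -- uniform bound on each region
  have hbd : ∀ m : ℕ, ∫⁻ y in Bm m, ψ y ∂ν
      ≤ ENNReal.ofReal (2 * ‖K‖ * (μ univ).toReal) := by
    intro m
    have h1 := core_bound hk hrep (hBm m) (hkBm m)
    have hmeasreg : MeasurableSet (univ ×ˢ Bm m : Set (X × Y)) :=
      MeasurableSet.univ.prod (hBm m)
    have h2 : ENNReal.ofReal (∫ p, |((univ ×ˢ Bm m).indicator k) p| ∂(μ.prod ν))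
        = ∫⁻ p, (‖((univ ×ˢ Bm m).indicator k) p‖₊ : ℝ≥0∞) ∂(μ.prod ν) := by
      have := ofReal_integral_norm_eq_lintegral_enorm (hkBm m)
      simp only [Real.norm_eq_abs, enorm_eq_nnnorm] at this
      exact this
    have hind : ∀ p : X × Y, (‖(univ ×ˢ Bm m).indicator k p‖₊ : ℝ≥0∞)
        = (univ ×ˢ Bm m).indicator (fun p => (‖k p‖₊ : ℝ≥0∞)) p := by
      intro p
      by_cases h : p ∈ (univ ×ˢ Bm m : Set (X × Y)) <;> simp [indicator, h]
    calc ∫⁻ y in Bm m, ψ y ∂ν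
        = ∫⁻ p in univ ×ˢ Bm m, (‖k p‖₊ : ℝ≥0∞) ∂(μ.prod ν) := (hregion _ (hBm m)).symm
      _ = ∫⁻ p, (‖((univ ×ˢ Bm m).indicator k) p‖₊ : ℝ≥0∞) ∂(μ.prod ν) := by
          simp only [hind]
          rw [lintegral_indicator hmeasreg]
      _ = ENNReal.ofReal (∫ p, |((univ ×ˢ Bm m).indicator k) p| ∂(μ.prod ν)) := h2.symm
      _ ≤ ENNReal.ofReal (2 * ‖K‖ * (μ univ).toReal) := ENNReal.ofReal_le_ofReal h1
  -- assemble
  refine ⟨hk.aestronglyMeasurable, ?_⟩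
  show ∫⁻ p, (‖k p‖₊ : ℝ≥0∞) ∂(μ.prod ν) < ⊤
  rw [lintegral_prod_symm' _ hk.nnnorm.coe_nnreal_ennreal]
  have hmono : Monotone fun m : ℕ => (Bm m).indicator ψ := by
    intro a b hab y
    show (Bm a).indicator ψ y ≤ (Bm b).indicator ψ y
    by_cases h : y ∈ Bm a
    · rw [indicator_of_mem h]
      have hyb : y ∈ Bm b := by
        have hx : ψ y ≤ (a : ℝ≥0∞) := h
        exact hx.trans (by exact_mod_cast Nat.cast_le.mpr hab)
      exact le_of_eq (indicator_of_mem hyb ψ).symm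
    · rw [indicator_of_notMem h]
      exact zero_le
  have hcongr : ∫⁻ y, ψ y ∂ν = ∫⁻ y, ⨆ m : ℕ, (Bm m).indicator ψ y ∂ν := by
    apply lintegral_congr_ae
    filter_upwards [hψfin] with y hy
    obtain ⟨m, hm⟩ := ENNReal.exists_nat_gt hy.ne
    apply le_antisymm
    · refine le_trans ?_ (le_iSup _ m)
      rw [indicator_of_mem (by exact hm.le : y ∈ Bm m)]
    · exact iSup_le fun n => indicator_le_self _ _ y
  rw [hcongr, lintegral_iSup (fun m => hψmeas.indicator (hBm m)) hmono]
  calc ⨆ m : ℕ, ∫⁻ y, (Bm m).indicator ψ y ∂ν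
      = ⨆ m : ℕ, ∫⁻ y in Bm m, ψ y ∂ν := by
        congr 1; funext m; rw [lintegral_indicator (hBm m)]
    _ ≤ ENNReal.ofReal (2 * ‖K‖ * (μ univ).toReal) := iSup_le hbd
    _ < ⊤ := ENNReal.ofReal_lt_top
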